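/- For n ≥ 1, the left ideal of the algebra M_n ⊗ M_n° (the enveloping algebra of M_n, where the second tensor factor carries the opposite multiplication) generated by the set of all elements p ⊗ (1−p) with p a projection in M_n is exactly the kernel of the multiplication map μ : M_n ⊗ M_n° → M_n, μ(a⊗b) = ab. -/

import Mathlib

open TensorProduct

/-- The multiplication map `μ : Mₙ ⊗ Mₙ° → Mₙ`, `a ⊗ b° ↦ a * b`. -/
noncomputable def envMul (n : ℕ) :
    Matrix (Fin n) (Fin n) ℂ ⊗[ℂ] (Matrix (Fin n) (Fin n) ℂ)ᵐᵒᵖ →ₗ[ℂ] Matrix (Fin n) (Fin n) ℂ :=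
  TensorProduct.lift (LinearMap.mk₂ ℂ (fun a b => a * MulOpposite.unop b)
    (fun a a' b => by simp [add_mul])
    (fun c a b => by simp [Matrix.smul_mul])
    (fun a b b' => by simp [mul_add])
    (fun c a b => by simp [Matrix.mul_smul]))

open Matrix

variable {n : ℕ}

local notation "E" => fun (i j : Fin n) => Matrix.single i j (1 : ℂ)

lemma star_std (i j : Fin n) (c : ℂ) : star (Matrix.single i j c) = Matrix.single j i (star c) := by
  ext a b
  simp only [Matrix.star_apply, Matrix.single, of_apply]
  split_ifs with h1 h2 h2 <;> simp_all [eq_comm]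

lemma mul_E_ne (a b c d : Fin n) (h : b ≠ c) :
    Matrix.single a b (1:ℂ) * Matrix.single c d (1:ℂ) = 0 :=
  by simp [h]

lemma mul_E_same (a b c : Fin n) :
    Matrix.single a b (1:ℂ) * Matrix.single b c (1:ℂ) = Matrix.single a c (1:ℂ) := by
  rw [Matrix.single_mul_single_same, one_mul]

lemma proj_p (i j : Fin n) (hij : i ≠ j) :
    let p := (2⁻¹ : ℂ) • (E i i + E i j + E j i + E j j)
    star p = p ∧ p * p = p := by
  intro p
  have hji : j ≠ i := hij.symm
  constructor
  · simp only [p, star_smul, star_add, star_std]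
    norm_num
    abel
  · simp only [p, smul_mul_smul_comm, add_mul, mul_add, mul_E_same,
      mul_E_ne i i j i hij, mul_E_ne i i j j hij, mul_E_ne j i j i hij, mul_E_ne j i j j hij,
      mul_E_ne i j i i hji, mul_E_ne i j i j hji, mul_E_ne j j i i hji, mul_E_ne j j i j hji]
    module

lemma proj_q (i j : Fin n) (hij : i ≠ j) :
    let q := (2⁻¹ : ℂ) • (E i i + Complex.I • E i j + (-Complex.I) • E j i + E j j)
    star q = q ∧ q * q = q := by
  intro q
  have hji : j ≠ i := hij.symm
  constructor
  · simp only [q, star_smul, star_add, star_std, smul_single]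
    norm_num [Complex.star_def]
    abel
  · simp only [q, smul_mul_smul_comm, add_mul, mul_add, mul_smul_comm, smul_mul_assoc,
      mul_E_same,
      mul_E_ne i i j i hij, mul_E_ne i i j j hij, mul_E_ne j i j i hij, mul_E_ne j i j j hij,
      mul_E_ne i j i i hji, mul_E_ne i j i j hji, mul_E_ne j j i i hji, mul_E_ne j j i j hji,
      smul_zero]
    match_scalars <;> first
      | (ring_nf; simp [Complex.I_sq]; norm_num)
      | (ring_nf; simp [Complex.I_sq])
      | ring_nf

lemma projSet_span :
    Submodule.span ℂ {p : Matrix (Fin n) (Fin n) ℂ | star p = p ∧ p * p = p} = ⊤ := by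
  rw [eq_top_iff]
  rintro a -
  have key : ∀ i j : Fin n, (E i j) ∈
      Submodule.span ℂ {p : Matrix (Fin n) (Fin n) ℂ | star p = p ∧ p * p = p} := by
    intro i j
    set S := {p : Matrix (Fin n) (Fin n) ℂ | star p = p ∧ p * p = p}
    have hEii : ∀ k : Fin n, (E k k) ∈ Submodule.span ℂ S := by
      intro k
      refine Submodule.subset_span ⟨?_, ?_⟩
      · rw [star_std]; norm_num
      · rw [Matrix.single_mul_single_same]; norm_num
    by_cases hij : i = j
    · subst hij; exact hEii i
    · have hp := proj_p i j hij
      have hq := proj_q i j hij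
      set p := (2⁻¹ : ℂ) • (E i i + E i j + E j i + E j j) with hpdef
      set q := (2⁻¹ : ℂ) • (E i i + Complex.I • E i j + (-Complex.I) • E j i + E j j) with hqdef
      have hpmem : p ∈ Submodule.span ℂ S := Submodule.subset_span ⟨hp.1, hp.2⟩
      have hqmem : q ∈ Submodule.span ℂ S := Submodule.subset_span ⟨hq.1, hq.2⟩
      have hcomb : (E i j) = p + (-Complex.I) • q
          + ((Complex.I - 1)/2) • (E i i) + ((Complex.I - 1)/2) • (E j j) := by
        rw [hpdef, hqdef]
        match_scalars <;> first
          | (ring_nf; simp [Complex.I_sq]; ring_nf)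
          | (ring_nf; simp [Complex.I_sq])
          | ring_nf
      rw [hcomb]
      exact add_mem (add_mem (add_mem hpmem (Submodule.smul_mem _ _ hqmem))
        (Submodule.smul_mem _ _ (hEii i))) (Submodule.smul_mem _ _ (hEii j))
  have := Matrix.matrix_eq_sum_single a
  rw [this]
  apply Submodule.sum_mem
  intro i _
  apply Submodule.sum_mem
  intro j _
  have : Matrix.single i j (a i j) = (a i j) • (E i j) := by simp
  rw [this]
  exact Submodule.smul_mem _ _ (key i j)

open MulOpposite in
lemma envMul_tmul (a : Matrix (Fin n) (Fin n) ℂ) (b : (Matrix (Fin n) (Fin n) ℂ)ᵐᵒᵖ) :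
    envMul n (a ⊗ₜ[ℂ] b) = a * unop b := rfl

open MulOpposite in
lemma envMul_mul_tmul (a b : Matrix (Fin n) (Fin n) ℂ)
    (x : Matrix (Fin n) (Fin n) ℂ ⊗[ℂ] (Matrix (Fin n) (Fin n) ℂ)ᵐᵒᵖ) :
    envMul n ((a ⊗ₜ[ℂ] op b) * x) = a * envMul n x * b := by
  induction x using TensorProduct.induction_on with
  | zero => simp
  | tmul c d =>
      simp only [Algebra.TensorProduct.tmul_mul_tmul, envMul_tmul]
      simp [mul_assoc]
  | add x y hx hy => simp [mul_add, add_mul, hx, hy]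

open MulOpposite in
lemma envMul_mul_eq_zero (r x : Matrix (Fin n) (Fin n) ℂ ⊗[ℂ] (Matrix (Fin n) (Fin n) ℂ)ᵐᵒᵖ)
    (hx : envMul n x = 0) : envMul n (r * x) = 0 := by
  induction r using TensorProduct.induction_on with
  | zero => simp
  | tmul a b =>
      rw [← op_unop b, envMul_mul_tmul, hx]
      simp
  | add r s hr hs => rw [add_mul, map_add, hr, hs, add_zero]

open MulOpposite in
theorem stmt4 (n : ℕ) (hn : 1 ≤ n)
    (x : Matrix (Fin n) (Fin n) ℂ ⊗[ℂ] (Matrix (Fin n) (Fin n) ℂ)ᵐᵒᵖ) :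
    x ∈ Ideal.span
        {y : Matrix (Fin n) (Fin n) ℂ ⊗[ℂ] (Matrix (Fin n) (Fin n) ℂ)ᵐᵒᵖ |
          ∃ p : Matrix (Fin n) (Fin n) ℂ, star p = p ∧ p * p = p ∧
            y = p ⊗ₜ[ℂ] (MulOpposite.op (1 - p))} ↔
      envMul n x = 0 := by
  set M := Matrix (Fin n) (Fin n) ℂ
  set S := {y : M ⊗[ℂ] Mᵐᵒᵖ | ∃ p : M, star p = p ∧ p * p = p ∧
            y = p ⊗ₜ[ℂ] (MulOpposite.op (1 - p))} with hS
  constructor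
  · intro hx
    induction hx using Submodule.span_induction with
    | mem y hy =>
        obtain ⟨p, _, hp2, rfl⟩ := hy
        rw [envMul_tmul]
        simp [mul_sub, hp2]
    | zero => simp
    | add y z _ _ hy hz => rw [map_add, hy, hz, add_zero]
    | smul r y _ hy => rw [smul_eq_mul]; exact envMul_mul_eq_zero r y hy
  · intro hx
    -- commutators of projections lie in the span
    have hproj : ∀ p : M, star p = p → p * p = p →
        p ⊗ₜ[ℂ] (op (1 : M)) - (1 : M) ⊗ₜ[ℂ] (op p) ∈ Ideal.span S := by
      intro p hps hp2
      have h1 : p ⊗ₜ[ℂ] (op (1 - p)) ∈ Ideal.span S :=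
        Ideal.subset_span ⟨p, hps, hp2, rfl⟩
      have h2 : (1 - p) ⊗ₜ[ℂ] (op (1 - (1 - p))) ∈ Ideal.span S := by
        refine Ideal.subset_span ⟨1 - p, ?_, ?_, rfl⟩
        · rw [star_sub, star_one, hps]
        · simp [mul_sub, sub_mul, hp2]
      have heq : p ⊗ₜ[ℂ] (op (1 : M)) - (1 : M) ⊗ₜ[ℂ] (op p)
          = p ⊗ₜ[ℂ] (op (1 - p)) - (1 - p) ⊗ₜ[ℂ] (op (1 - (1 - p))) := by
        simp only [sub_sub_cancel, op_sub, tmul_sub, sub_tmul]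
        abel
      rw [heq]
      exact sub_mem h1 h2
    -- commutators of arbitrary elements lie in the span
    have hcomm : ∀ a : M, a ⊗ₜ[ℂ] (op (1 : M)) - (1 : M) ⊗ₜ[ℂ] (op a) ∈ Ideal.span S := by
      let L : M →ₗ[ℂ] M ⊗[ℂ] Mᵐᵒᵖ :=
        ((TensorProduct.mk ℂ M Mᵐᵒᵖ).flip (op (1 : M))) -
          ((TensorProduct.mk ℂ M Mᵐᵒᵖ (1 : M)).comp (opLinearEquiv ℂ).toLinearMap)
      intro a
      have hL : ∀ b : M, L b = b ⊗ₜ[ℂ] (op (1 : M)) - (1 : M) ⊗ₜ[ℂ] (op b) := fun b => rfl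
      have hsub : (⊤ : Submodule ℂ M) ≤
          ((Ideal.span S).restrictScalars ℂ).comap L := by
        rw [← projSet_span]
        apply Submodule.span_le.mpr
        rintro p ⟨hps, hp2⟩
        have hmem : L p ∈ (Ideal.span S).restrictScalars ℂ := by
          rw [hL]; exact hproj p hps hp2
        exact SetLike.mem_coe.mpr (Submodule.mem_comap.mpr hmem)
      have := hsub (Submodule.mem_top (x := a))
      simpa [hL] using this
    -- reduction: x - μ(x) ⊗ 1 ∈ span
    have hred : ∀ y : M ⊗[ℂ] Mᵐᵒᵖ,
        y - (envMul n y) ⊗ₜ[ℂ] (op (1 : M)) ∈ Ideal.span S := by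
      intro y
      induction y using TensorProduct.induction_on with
      | zero => simp
      | tmul c d =>
          rw [envMul_tmul]
          have heq : c ⊗ₜ[ℂ] d - (c * unop d) ⊗ₜ[ℂ] (op (1 : M))
              = -((c ⊗ₜ[ℂ] (op (1 : M))) *
                  ((unop d) ⊗ₜ[ℂ] (op (1 : M)) - (1 : M) ⊗ₜ[ℂ] d)) := by
            rw [mul_sub]
            simp only [Algebra.TensorProduct.tmul_mul_tmul]
            simp [neg_sub]
          rw [heq]
          refine neg_mem (Ideal.mul_mem_left _ _ ?_)
          have := hcomm (unop d)
          simpa using this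
      | add y z hy hz =>
          have : y + z - envMul n (y + z) ⊗ₜ[ℂ] (op (1 : M))
              = (y - envMul n y ⊗ₜ[ℂ] (op (1 : M))) + (z - envMul n z ⊗ₜ[ℂ] (op (1 : M))) := by
            rw [map_add, add_tmul]; abel
          rw [this]
          exact add_mem hy hz
    have := hred x
    rw [hx] at this
    simpa using this
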